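/- arXiv:2507.12503 — 2 statements merged into one kernel-verified Lean document; each statement's English description precedes it below -/
import Mathlib

section
/- Let G be a finite simple directed graph without self-loops. Then for every integer k≥3, r_k = r_{k−1} A_α − r_{k−2} (D − I), where r_k := Σ_{r=0}^{R−1} α^r P_{(k,r)}. -/
open Matrix BigOperators
open scoped Classical

namespace CNBT

variable {n : ℕ}

/-- `u ↔ v`: directed edges in both directions. -/
def bidir (E : Fin n → Fin n → Prop) (u v : Fin n) : Prop := E u v ∧ E v u

/-- `u → v`: a directed edge from `u` to `v` only. -/
def fwd (E : Fin n → Fin n → Prop) (u v : Fin n) : Prop := E u v ∧ ¬ E v u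

/-- `u ← v`: a directed edge from `v` to `u` only. -/
def bwd (E : Fin n → Fin n → Prop) (u v : Fin n) : Prop := E v u ∧ ¬ E u v

/-- adjacency in the underlying undirected graph `U_G`. -/
def adj (E : Fin n → Fin n → Prop) (u v : Fin n) : Prop := E u v ∨ E v u

/-- degree of `u` in the underlying undirected graph. -/
noncomputable def deg (E : Fin n → Fin n → Prop) (u : Fin n) : ℕ :=
  (Finset.univ.filter (fun v => adj E u v)).card

/-- the Hermitian adjacency matrix `A_α`. -/
noncomputable def Aalpha (E : Fin n → Fin n → Prop) (α : ℂ) : Matrix (Fin n) (Fin n) ℂ :=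
  Matrix.of fun u v =>
    if bidir E u v then 1
    else if fwd E u v then α
    else if bwd E u v then (starRingEnd ℂ) α
    else 0

/-- the degree diagonal matrix `D` (complex entries). -/
noncomputable def Dmat (E : Fin n → Fin n → Prop) : Matrix (Fin n) (Fin n) ℂ :=
  Matrix.diagonal fun u => (deg E u : ℂ)

/-- the degree diagonal matrix `D` (integer entries). -/
noncomputable def DmatZ (E : Fin n → Fin n → Prop) : Matrix (Fin n) (Fin n) ℤ :=
  Matrix.diagonal fun u => (deg E u : ℤ)

/-- indicator matrix `↔A` of the relation `u ↔ v`. -/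
noncomputable def AbiZ (E : Fin n → Fin n → Prop) : Matrix (Fin n) (Fin n) ℤ :=
  Matrix.of fun u v => if bidir E u v then 1 else 0

/-- indicator matrix `→A` of the relation `u → v`. -/
noncomputable def AfwdZ (E : Fin n → Fin n → Prop) : Matrix (Fin n) (Fin n) ℤ :=
  Matrix.of fun u v => if fwd E u v then 1 else 0

/-- indicator matrix `←A` of the relation `u ← v`. -/
noncomputable def AbwdZ (E : Fin n → Fin n → Prop) : Matrix (Fin n) (Fin n) ℤ :=
  Matrix.of fun u v => if bwd E u v then 1 else 0

/-- rotation of a single step: `1` if `u → v`, `-1` if `u ← v`, `0` if `u ↔ v`. -/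
noncomputable def stepRot (E : Fin n → Fin n → Prop) (u v : Fin n) : ℤ :=
  if fwd E u v then 1 else if bwd E u v then -1 else 0

/-- `w : Fin (k+1) → Fin n` is a non-backtracking mixed walk of length `k`:
consecutive vertices are adjacent in `U_G`, and no vertex equals the vertex two steps later. -/
def IsNBTWalk (E : Fin n → Fin n → Prop) (k : ℕ) (w : Fin (k + 1) → Fin n) : Prop :=
  (∀ i j : Fin (k + 1), (j : ℕ) = (i : ℕ) + 1 → adj E (w i) (w j)) ∧
  (∀ i j : Fin (k + 1), (j : ℕ) = (i : ℕ) + 2 → w i ≠ w j)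

/-- total (integer) rotation of a mixed walk of length `k`. -/
noncomputable def walkRot (E : Fin n → Fin n → Prop) (k : ℕ) (w : Fin (k + 1) → Fin n) : ℤ :=
  ∑ i : Fin k, stepRot E (w i.castSucc) (w i.succ)

/-- `P_{(k,r)}`: the `(u,v)` entry counts NBT mixed walks of length `k`
and rotation `r` (mod `R`) from `u` to `v`. -/
noncomputable def Pmat (E : Fin n → Fin n → Prop) (R : ℕ) [NeZero R] (k : ℕ) (r : ZMod R) :
    Matrix (Fin n) (Fin n) ℤ :=
  Matrix.of fun u v =>
    ((Finset.univ.filter (fun w : Fin (k + 1) → Fin n =>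
      w 0 = u ∧ w (Fin.last k) = v ∧ IsNBTWalk E k w ∧
      ((walkRot E k w : ZMod R) = r))).card : ℤ)

/-- `r_k := Σ_{r=0}^{R-1} α^r P_{(k,r)}`. -/
noncomputable def rk (E : Fin n → Fin n → Prop) (α : ℂ) (R : ℕ) [NeZero R] (k : ℕ) :
    Matrix (Fin n) (Fin n) ℂ :=
  ∑ r : ZMod R, (α ^ r.val) • (Pmat E R k r).map (fun z : ℤ => (z : ℂ))

/-- `Ē`: directed edges obtained by orienting each edge of `U_G` in both directions. -/
abbrev DEdge (E : Fin n → Fin n → Prop) : Type := { p : Fin n × Fin n // adj E p.1 p.2 }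

/-- the non-backtracking matrix `B`. -/
noncomputable def Bmat (E : Fin n → Fin n → Prop) : Matrix (DEdge E) (DEdge E) ℂ :=
  Matrix.of fun e f => if e.1.2 = f.1.1 ∧ e.1.1 ≠ f.1.2 then 1 else 0

/-- edge type `λ_e`. -/
noncomputable def lam (E : Fin n → Fin n → Prop) (α : ℂ) (e : DEdge E) : ℂ :=
  if bidir E e.1.1 e.1.2 then 1
  else if fwd E e.1.1 e.1.2 then α
  else (starRingEnd ℂ) α

/-- the complex non-backtracking matrix `B_α = B Λ`. -/
noncomputable def Balpha (E : Fin n → Fin n → Prop) (α : ℂ) : Matrix (DEdge E) (DEdge E) ℂ :=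
  Bmat E * Matrix.diagonal (lam E α)

/-- `↔B`: the part of `B` with `i_f ↔ t_f` (integer entries). -/
noncomputable def BbiZ (E : Fin n → Fin n → Prop) : Matrix (DEdge E) (DEdge E) ℤ :=
  Matrix.of fun e f =>
    if (e.1.2 = f.1.1 ∧ e.1.1 ≠ f.1.2) ∧ bidir E f.1.1 f.1.2 then 1 else 0

/-- `→B`: the part of `B` with `i_f → t_f` (integer entries). -/
noncomputable def BfwdZ (E : Fin n → Fin n → Prop) : Matrix (DEdge E) (DEdge E) ℤ :=
  Matrix.of fun e f =>
    if (e.1.2 = f.1.1 ∧ e.1.1 ≠ f.1.2) ∧ fwd E f.1.1 f.1.2 then 1 else 0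

/-- `←B`: the part of `B` with `i_f ← t_f` (integer entries). -/
noncomputable def BbwdZ (E : Fin n → Fin n → Prop) : Matrix (DEdge E) (DEdge E) ℤ :=
  Matrix.of fun e f =>
    if (e.1.2 = f.1.1 ∧ e.1.1 ≠ f.1.2) ∧ bwd E f.1.1 f.1.2 then 1 else 0

/-- `Q_{(k,r)}`: the `(e,f)` entry counts NBT mixed walks of length `k` and rotation `r`
whose last step traverses `f`, to which `e` can be prepended while keeping the walk NBT;
`Q_{(0,0)} = I` and `Q_{(0,r)} = 0` for `r ≠ 0`. -/
noncomputable def Qmat (E : Fin n → Fin n → Prop) (R : ℕ) [NeZero R] :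
    (k : ℕ) → ZMod R → Matrix (DEdge E) (DEdge E) ℤ
  | 0, r => if r = 0 then 1 else 0
  | (k + 1), r => Matrix.of fun e f =>
      ((Finset.univ.filter (fun w : Fin (k + 1 + 1) → Fin n =>
        IsNBTWalk E (k + 1) w ∧ ((walkRot E (k + 1) w : ZMod R) = r) ∧
        w ⟨k, by omega⟩ = f.1.1 ∧ w (Fin.last (k + 1)) = f.1.2 ∧
        e.1.2 = w 0 ∧ e.1.1 ≠ w 1)).card : ℤ)

/-- the double traversal `C²` of a closed mixed walk `C` of length `k`. -/
noncomputable def doubleWalk (k : ℕ) (w : Fin (k + 1) → Fin n) : Fin (2 * k + 1) → Fin n :=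
  fun i =>
    if h : (i : ℕ) ≤ k then w ⟨(i : ℕ), Nat.lt_succ_of_le h⟩
    else w ⟨(i : ℕ) - k, by have := i.isLt; omega⟩

/-- `n_{(k,r)}`: the number of tailless NBT cycles of length `k` and rotation `r`,
i.e. closed mixed walks `C` such that both `C` and `C²` are NBT. -/
noncomputable def ncyc (E : Fin n → Fin n → Prop) (R : ℕ) [NeZero R] (k : ℕ) (r : ZMod R) : ℤ :=
  ((Finset.univ.filter (fun w : Fin (k + 1) → Fin n =>
    w 0 = w (Fin.last k) ∧ IsNBTWalk E k w ∧
    IsNBTWalk E (2 * k) (doubleWalk k w) ∧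
    ((walkRot E k w : ZMod R) = r))).card : ℤ)

/-- the in-vector `g_α^in`. -/
noncomputable def inVec (E : Fin n → Fin n → Prop) (g : DEdge E → ℂ) : Fin n → ℂ :=
  fun u => ∑ e : DEdge E, if e.1.2 = u then g e else 0

/-- the out-vector `g_α^out`. -/
noncomputable def outVec (E : Fin n → Fin n → Prop) (α : ℂ) (g : DEdge E → ℂ) : Fin n → ℂ :=
  fun u => ∑ e : DEdge E, if e.1.1 = u then lam E α e * g e else 0

/-! ### Auxiliary lemmas -/

section Aux

variable {E : Fin n → Fin n → Prop}

lemma adj_symm {u v : Fin n} (h : adj E u v) : adj E v u := h.symm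

lemma stepRot_swap (E : Fin n → Fin n → Prop) (u v : Fin n) :
    stepRot E u v + stepRot E v u = 0 := by
  unfold stepRot fwd bwd
  by_cases h1 : E u v <;> by_cases h2 : E v u <;> simp [h1, h2]

/-- natural-index characterization of `IsNBTWalk`. -/
lemma isNBTWalk_iff (E : Fin n → Fin n → Prop) (k : ℕ) (w : Fin (k + 1) → Fin n) :
    IsNBTWalk E k w ↔
      ((∀ i : ℕ, ∀ h : i + 1 ≤ k,
          adj E (w ⟨i, by omega⟩) (w ⟨i + 1, by omega⟩)) ∧
       (∀ i : ℕ, ∀ h : i + 2 ≤ k, w ⟨i, by omega⟩ ≠ w ⟨i + 2, by omega⟩)) := by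
  constructor
  · rintro ⟨h1, h2⟩
    constructor
    · intro i h
      exact h1 ⟨i, by omega⟩ ⟨i + 1, by omega⟩ rfl
    · intro i h
      exact h2 ⟨i, by omega⟩ ⟨i + 2, by omega⟩ rfl
  · rintro ⟨h1, h2⟩
    constructor
    · rintro ⟨i, hi⟩ ⟨j, hj⟩ hij
      simp only at hij
      subst hij
      exact h1 i (by omega)
    · rintro ⟨i, hi⟩ ⟨j, hj⟩ hij
      simp only at hij
      subst hij
      exact h2 i (by omega)

/-- step rotation at natural index `i`, with an out-of-range default. -/
noncomputable def nstep (E : Fin n → Fin n → Prop) {k : ℕ} (w : Fin (k + 1) → Fin n)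
    (i : ℕ) : ℤ :=
  if h : i + 1 ≤ k then stepRot E (w ⟨i, by omega⟩) (w ⟨i + 1, by omega⟩) else 0

lemma nstep_of_le {k : ℕ} (w : Fin (k + 1) → Fin n) {i : ℕ} (h : i + 1 ≤ k) :
    nstep E w i = stepRot E (w ⟨i, by omega⟩) (w ⟨i + 1, by omega⟩) := dif_pos h

lemma walkRot_eq_sum_range (E : Fin n → Fin n → Prop) (k : ℕ) (w : Fin (k + 1) → Fin n) :
    walkRot E k w = ∑ i ∈ Finset.range k, nstep E w i := by
  rw [walkRot, ← Fin.sum_univ_eq_sum_range (fun i => nstep E w i) k]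
  refine Finset.sum_congr rfl fun i _ => ?_
  rw [nstep_of_le w (by omega)]
  rfl

/-- truncation of a walk. -/
def trunc {k m : ℕ} (h : m ≤ k) (w : Fin (k + 1) → Fin n) : Fin (m + 1) → Fin n :=
  fun i => w ⟨(i : ℕ), by omega⟩

/-- one-step extension of a walk. -/
noncomputable def ext1 {k : ℕ} (w : Fin (k + 1) → Fin n) (x : Fin n) :
    Fin (k + 2) → Fin n :=
  fun i => if h : (i : ℕ) ≤ k then w ⟨(i : ℕ), by omega⟩ else x

lemma ext1_of_le {k : ℕ} (w : Fin (k + 1) → Fin n) (x : Fin n) {i : ℕ}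
    (hik : i < k + 2) (h : i ≤ k) : ext1 w x ⟨i, hik⟩ = w ⟨i, by omega⟩ := dif_pos h

lemma ext1_last {k : ℕ} (w : Fin (k + 1) → Fin n) (x : Fin n) {i : ℕ}
    (hik : i < k + 2) (h : i = k + 1) : ext1 w x ⟨i, hik⟩ = x := dif_neg (by show ¬ i ≤ k; omega)

lemma trunc_ext1 {k : ℕ} (w : Fin (k + 1) → Fin n) (x : Fin n) :
    trunc (by omega : k ≤ k + 1) (ext1 w x) = w := by
  funext i
  simp only [trunc]
  rw [ext1_of_le w x _ (by omega)]

lemma ext1_trunc {k : ℕ} (w : Fin (k + 2) → Fin n) :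
    ext1 (trunc (by omega : k ≤ k + 1) w) (w (Fin.last (k + 1))) = w := by
  funext i
  rcases i with ⟨i, hi⟩
  by_cases h : i ≤ k
  · rw [ext1_of_le _ _ _ h]; rfl
  · rw [ext1_last _ _ _ (by omega)]
    congr 1
    exact Fin.ext (show k + 1 = i by omega)

lemma nstep_trunc {k m : ℕ} (hmk : m ≤ k) (w : Fin (k + 1) → Fin n) {i : ℕ}
    (h : i + 1 ≤ m) : nstep E (trunc hmk w) i = nstep E w i := by
  rw [nstep_of_le _ h, nstep_of_le _ (by omega)]; rfl

lemma walkRot_ext1 (E : Fin n → Fin n → Prop) {k : ℕ} (w : Fin (k + 1) → Fin n) (x : Fin n) :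
    walkRot E (k + 1) (ext1 w x) = walkRot E k w + stepRot E (w (Fin.last k)) x := by
  rw [walkRot_eq_sum_range, walkRot_eq_sum_range, Finset.sum_range_succ]
  congr 1
  · refine Finset.sum_congr rfl fun i hi => ?_
    rw [Finset.mem_range] at hi
    rw [nstep_of_le _ (by omega), nstep_of_le _ (by omega)]
    rw [ext1_of_le _ _ _ (by omega), ext1_of_le _ _ _ (by omega)]
  · rw [nstep_of_le _ (by omega)]
    rw [ext1_of_le _ _ _ (by omega), ext1_last _ _ _ rfl]
    rfl

lemma walkRot_trunc (E : Fin n → Fin n → Prop) {k m : ℕ} (hmk : m ≤ k)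
    (w : Fin (k + 1) → Fin n) :
    walkRot E m (trunc hmk w) = ∑ i ∈ Finset.range m, nstep E w i := by
  rw [walkRot_eq_sum_range]
  exact Finset.sum_congr rfl fun i hi =>
    nstep_trunc hmk w (by rw [Finset.mem_range] at hi; omega)

/-- the set of NBT walks of length `k` from `u` to `v`. -/
noncomputable def Wset (E : Fin n → Fin n → Prop) (k : ℕ) (u v : Fin n) :
    Finset (Fin (k + 1) → Fin n) :=
  Finset.univ.filter fun w => w 0 = u ∧ w (Fin.last k) = v ∧ IsNBTWalk E k w

lemma alpha_zpow_val {α : ℂ} (hα : α ≠ 0) {R : ℕ} [NeZero R] (hroot : α ^ R = 1)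
    (m : ℤ) : α ^ (((m : ZMod R)).val) = α ^ m := by
  set N : ℕ := (((m : ZMod R)).val) with hN
  have h1 : (((N : ℤ)) : ZMod R) = ((m : ZMod R)) := by
    push_cast [hN, ZMod.natCast_val, ZMod.cast_id]
    rfl
  have h2 : ((N : ℤ)) ≡ m [ZMOD (R : ℤ)] := by
    rwa [ZMod.intCast_eq_intCast_iff] at h1
  obtain ⟨t, ht⟩ := h2.dvd
  have hm : m = ((N : ℤ)) + (R : ℤ) * t := by omega
  have hR : α ^ ((R : ℤ)) = 1 := by rw [zpow_natCast, hroot]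
  rw [hm, zpow_add₀ hα, _root_.zpow_mul, hR, _root_.one_zpow, mul_one, zpow_natCast]

lemma rk_apply (E : Fin n → Fin n → Prop) {α : ℂ} (hα : α ≠ 0) (R : ℕ) [NeZero R]
    (hroot : α ^ R = 1) (k : ℕ) (u v : Fin n) :
    rk E α R k u v = ∑ w ∈ Wset E k u v, α ^ (walkRot E k w) := by
  have hfib := Finset.sum_fiberwise (Wset E k u v)
    (fun w => ((walkRot E k w : ZMod R))) (fun w => α ^ (walkRot E k w))
  rw [← hfib, rk, Matrix.sum_apply]
  refine Finset.sum_congr rfl fun r _ => ?_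
  simp only [Matrix.smul_apply, Matrix.map_apply, Pmat, Matrix.of_apply, smul_eq_mul]
  have hset : (Finset.univ.filter (fun w : Fin (k + 1) → Fin n =>
      w 0 = u ∧ w (Fin.last k) = v ∧ IsNBTWalk E k w ∧
      ((walkRot E k w : ZMod R) = r))) =
      (Wset E k u v).filter (fun w => ((walkRot E k w : ZMod R)) = r) := by
    rw [Wset, Finset.filter_filter]
    exact Finset.filter_congr fun w _ => by tauto
  rw [hset]
  rw [Finset.sum_congr rfl (fun w hw => show α ^ (walkRot E k w) = (α ^ (r.val) : ℂ) by
    rw [Finset.mem_filter] at hw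
    rw [← hw.2, alpha_zpow_val hα hroot])]
  rw [Finset.sum_const, nsmul_eq_mul, mul_comm]
  push_cast
  ring

lemma Aalpha_apply_eq {α : ℂ} (habs : ‖α‖ = 1) (E : Fin n → Fin n → Prop)
    (x v : Fin n) :
    Aalpha E α x v = if adj E x v then α ^ (stepRot E x v) else 0 := by
  have hα : α ≠ 0 := by
    intro h; rw [h] at habs; simp at habs
  have hconj : (starRingEnd ℂ) α = α⁻¹ := by
    refine eq_inv_of_mul_eq_one_left ?_
    rw [mul_comm, Complex.mul_conj, Complex.normSq_eq_norm_sq, habs]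
    norm_num
  unfold Aalpha stepRot
  by_cases hb : bidir E x v
  · have ha : adj E x v := Or.inl hb.1
    have hf : ¬ fwd E x v := fun h => h.2 hb.2
    have hw : ¬ bwd E x v := fun h => h.2 hb.1
    simp [hb, hf, hw, ha]
  by_cases hf : fwd E x v
  · have ha : adj E x v := Or.inl hf.1
    simp [hb, hf, ha]
  by_cases hw : bwd E x v
  · have ha : adj E x v := Or.inr hw.1
    simp [hb, hf, hw, ha, hconj]
  · have ha : ¬ adj E x v := by
      rintro (h | h)
      · by_cases h2 : E v x
        · exact hb ⟨h, h2⟩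
        · exact hf ⟨h, h2⟩
      · by_cases h2 : E x v
        · exact hb ⟨h2, h⟩
        · exact hw ⟨h, h2⟩
    simp [hb, hf, hw, ha]

end Aux


lemma fin_mk_zero {m : ℕ} (h : 0 < m + 1) : (⟨0, h⟩ : Fin (m + 1)) = 0 := by
  ext; simp

lemma fin_mk_last {m : ℕ} (h : m < m + 1) : (⟨m, h⟩ : Fin (m + 1)) = Fin.last m := rfl

/-- "almost walks": all steps adjacent, NBT except possibly the final condition. -/
noncomputable def AWset (E : Fin n → Fin n → Prop) (l : ℕ) (u v : Fin n) :
    Finset (Fin (l + 4) → Fin n) :=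
  Finset.univ.filter fun w => w 0 = u ∧ w (Fin.last (l + 3)) = v ∧
    IsNBTWalk E (l + 2) (trunc (by omega) w) ∧
    adj E (w ⟨l + 2, by omega⟩) (w (Fin.last (l + 3)))

/-- the target set of prefix walks. -/
noncomputable def Bset (E : Fin n → Fin n → Prop) (l : ℕ) (u v : Fin n) :
    Finset (Fin (l + 3) → Fin n) :=
  Finset.univ.filter fun W => W 0 = u ∧ IsNBTWalk E (l + 2) W ∧
    adj E (W (Fin.last (l + 2))) v

lemma trunc_zero {k m : ℕ} (h : m ≤ k) (w : Fin (k + 1) → Fin n) :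
    trunc h w 0 = w 0 := congrArg w (by ext; simp)

lemma ext1_zero {k : ℕ} (w : Fin (k + 1) → Fin n) (x : Fin n) : ext1 w x 0 = w 0 := by
  rw [show (0 : Fin (k + 2)) = ⟨0, by omega⟩ from (fin_mk_zero _).symm,
    ext1_of_le _ _ _ (by omega), fin_mk_zero]

lemma sum_AWset_eq_sum_Bset {E : Fin n → Fin n → Prop} {α : ℂ} (hα : α ≠ 0)
    (l : ℕ) (u v : Fin n) :
    ∑ w ∈ AWset E l u v, α ^ walkRot E (l + 3) w =
      ∑ W ∈ Bset E l u v,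
        α ^ walkRot E (l + 2) W * α ^ stepRot E (W (Fin.last (l + 2))) v := by
  refine Finset.sum_nbij' (fun w => trunc (by omega) w) (fun W => ext1 W v) ?_ ?_ ?_ ?_ ?_
  · intro w hw
    rw [AWset, Finset.mem_filter] at hw
    obtain ⟨-, h0, hlast, hNBT, hadj⟩ := hw
    rw [Bset, Finset.mem_filter]
    refine ⟨Finset.mem_univ _, ?_, hNBT, ?_⟩
    · show trunc (show l + 2 ≤ l + 3 by omega) w 0 = u
      rw [trunc_zero]; exact h0
    · show adj E (trunc (show l + 2 ≤ l + 3 by omega) w (Fin.last (l + 2))) v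
      exact hlast ▸ hadj
  · intro W hW
    rw [Bset, Finset.mem_filter] at hW
    obtain ⟨-, h0, hNBT, hadj⟩ := hW
    rw [AWset, Finset.mem_filter]
    refine ⟨Finset.mem_univ _, ?_, ?_, ?_, ?_⟩
    · show ext1 W v 0 = u
      rw [ext1_zero]; exact h0
    · exact ext1_last W v (by omega) rfl
    · show IsNBTWalk E (l + 2) (trunc (show l + 2 ≤ l + 3 by omega) (ext1 W v))
      rw [trunc_ext1 W v]; exact hNBT
    · show adj E (ext1 W v ⟨l + 2, by omega⟩) (ext1 W v (Fin.last (l + 3)))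
      rw [ext1_of_le W v _ (by omega),
        show ext1 W v (Fin.last (l + 3)) = v from ext1_last W v (by omega) rfl]
      exact hadj
  · intro w hw
    rw [AWset, Finset.mem_filter] at hw
    obtain ⟨-, h0, hlast, hNBT, hadj⟩ := hw
    show ext1 (trunc (show l + 2 ≤ l + 3 by omega) w) v = w
    conv_lhs => rw [← hlast]
    exact ext1_trunc w
  · intro W hW
    exact trunc_ext1 W v
  · intro w hw
    rw [AWset, Finset.mem_filter] at hw
    obtain ⟨-, h0, hlast, hNBT, hadj⟩ := hw
    have hw' : w = ext1 (trunc (show l + 2 ≤ l + 3 by omega) w) v := by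
      conv_lhs => rw [← ext1_trunc w]
      rw [hlast]
    have key : walkRot E (l + 3) w =
        walkRot E (l + 2) (trunc (show l + 2 ≤ l + 3 by omega) w) +
          stepRot E (trunc (show l + 2 ≤ l + 3 by omega) w (Fin.last (l + 2))) v := by
      conv_lhs => rw [hw']
      exact walkRot_ext1 E _ v
    show α ^ walkRot E (l + 3) w =
      α ^ walkRot E (l + 2) (trunc (show l + 2 ≤ l + 3 by omega) w) *
        α ^ stepRot E (trunc (show l + 2 ≤ l + 3 by omega) w (Fin.last (l + 2))) v
    rw [key, zpow_add₀ hα]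

lemma AWset_filter_not {E : Fin n → Fin n → Prop} (l : ℕ) (u v : Fin n) :
    (AWset E l u v).filter (fun w => ¬ (w ⟨l + 1, by omega⟩ = v)) =
      Wset E (l + 3) u v := by
  ext w
  rw [Finset.mem_filter, AWset, Wset, Finset.mem_filter, Finset.mem_filter]
  constructor
  · rintro ⟨⟨-, h0, hlast, hNBT, hadj⟩, hne⟩
    refine ⟨Finset.mem_univ _, h0, hlast, ?_⟩
    rw [isNBTWalk_iff] at hNBT ⊢
    obtain ⟨hN1, hN2⟩ := hNBT
    constructor
    · intro i hi
      by_cases h : i + 1 ≤ l + 2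
      · exact hN1 i h
      · have hel : i = l + 2 := by omega
        subst hel
        exact hadj
    · intro i hi
      by_cases h : i + 2 ≤ l + 2
      · exact hN2 i h
      · have hel : i = l + 1 := by omega
        subst hel
        intro hc
        exact hne (by rw [hc]; exact hlast)
  · rintro ⟨-, h0, hlast, hNBT⟩
    rw [isNBTWalk_iff] at hNBT
    obtain ⟨hN1, hN2⟩ := hNBT
    refine ⟨⟨Finset.mem_univ _, h0, hlast, ?_, hN1 (l + 2) (by omega)⟩, ?_⟩
    · rw [isNBTWalk_iff]
      exact ⟨fun i hi => hN1 i (by omega), fun i hi => hN2 i (by omega)⟩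
    · intro hc
      exact hN2 (l + 1) (by omega) (hc.trans hlast.symm)

/-- neighbors of `v` other than `y`. -/
noncomputable def Nv (E : Fin n → Fin n → Prop) (v y : Fin n) : Finset (Fin n) :=
  (Finset.univ.filter fun x => adj E v x).erase y

lemma card_Nv {E : Fin n → Fin n → Prop} {v y : Fin n} (h : adj E v y) :
    (((Nv E v y).card : ℕ) : ℂ) = (deg E v : ℂ) - 1 := by
  have hy : y ∈ Finset.univ.filter (fun x => adj E v x) :=
    Finset.mem_filter.mpr ⟨Finset.mem_univ _, h⟩
  have hpos : 1 ≤ deg E v := Finset.card_pos.mpr ⟨y, hy⟩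
  rw [Nv, Finset.card_erase_of_mem hy,
    show (Finset.univ.filter fun x => adj E v x).card = deg E v from rfl,
    Nat.cast_sub hpos]
  norm_num

lemma sum_back {E : Fin n → Fin n → Prop} {α : ℂ} (hα : α ≠ 0) (l : ℕ) (u v : Fin n) :
    ∑ w ∈ (AWset E l u v).filter (fun w => w ⟨l + 1, by omega⟩ = v),
        α ^ walkRot E (l + 3) w
      = (∑ W ∈ Wset E (l + 1) u v, α ^ walkRot E (l + 1) W) * ((deg E v : ℂ) - 1) := by
  rw [Finset.sum_mul]
  have step1 : ∀ W ∈ Wset E (l + 1) u v,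
      α ^ walkRot E (l + 1) W * ((deg E v : ℂ) - 1)
        = ∑ _x ∈ Nv E v (W ⟨l, by omega⟩), α ^ walkRot E (l + 1) W := by
    intro W hW
    rw [Wset, Finset.mem_filter] at hW
    obtain ⟨-, h0, hlast, hNBT⟩ := hW
    have hadj : adj E v (W ⟨l, by omega⟩) := by
      have h1 : adj E (W ⟨l, by omega⟩) (W ⟨l + 1, by omega⟩) :=
        ((isNBTWalk_iff E (l + 1) W).mp hNBT).1 l (by omega)
      rw [show W ⟨l + 1, by omega⟩ = v from hlast] at h1
      exact adj_symm h1
    rw [Finset.sum_const, ← card_Nv hadj, nsmul_eq_mul, mul_comm]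
  have hsig := Finset.sum_sigma (Wset E (l + 1) u v)
    (fun W => Nv E v (W ⟨l, by omega⟩)) (fun p => α ^ walkRot E (l + 1) p.1)
  rw [Finset.sum_congr rfl step1, ← hsig]
  refine Finset.sum_nbij'
    (i := fun w => ⟨trunc (show l + 1 ≤ l + 3 by omega) w, w ⟨l + 2, by omega⟩⟩)
    (j := fun p => ext1 (ext1 p.1 p.2) v) ?_ ?_ ?_ ?_ ?_
  · intro w hw
    rw [Finset.mem_filter, AWset, Finset.mem_filter] at hw
    obtain ⟨⟨-, h0, hlast, hNBT, hadj⟩, hback⟩ := hw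
    obtain ⟨hA, hB⟩ := (isNBTWalk_iff _ _ _).mp hNBT
    rw [Finset.mem_sigma]
    constructor
    · rw [Wset, Finset.mem_filter]
      refine ⟨Finset.mem_univ _, ?_, hback, ?_⟩
      · show trunc (show l + 1 ≤ l + 3 by omega) w 0 = u
        rw [trunc_zero]; exact h0
      · exact (isNBTWalk_iff _ _ _).mpr
          ⟨fun i hi => hA i (by omega), fun i hi => hB i (by omega)⟩
    · rw [Nv, Finset.mem_erase]
      have hB2 := hB l (by omega)
      refine ⟨fun hc => hB2 hc.symm, Finset.mem_filter.mpr ⟨Finset.mem_univ _, ?_⟩⟩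
      have h1 : adj E (w ⟨l + 1, by omega⟩) (w ⟨l + 2, by omega⟩) := hA (l + 1) (by omega)
      rw [hback] at h1
      exact h1
  · rintro ⟨W, x⟩ hp
    rw [Finset.mem_sigma] at hp
    obtain ⟨hW, hx⟩ := hp
    rw [Wset, Finset.mem_filter] at hW
    obtain ⟨-, h0, hlast, hNBT⟩ := hW
    rw [Nv, Finset.mem_erase, Finset.mem_filter] at hx
    obtain ⟨hxne, -, hxadj⟩ := hx
    obtain ⟨hA, hB⟩ := (isNBTWalk_iff _ _ _).mp hNBT
    rw [Finset.mem_filter, AWset, Finset.mem_filter]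
    refine ⟨⟨Finset.mem_univ _, ?_, ?_, ?_, ?_⟩, ?_⟩
    · show ext1 (ext1 W x) v 0 = u
      rw [ext1_zero, ext1_zero]; exact h0
    · exact ext1_last _ v (by omega) rfl
    · show IsNBTWalk E (l + 2) (trunc (show l + 2 ≤ l + 3 by omega) (ext1 (ext1 W x) v))
      rw [trunc_ext1]
      refine (isNBTWalk_iff _ _ _).mpr ⟨?_, ?_⟩
      · intro i hi
        by_cases h : i + 1 ≤ l + 1
        · rw [ext1_of_le _ _ _ (by omega), ext1_of_le _ _ _ (by omega)]
          exact hA i h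
        · have hi' : i = l + 1 := by omega
          subst hi'
          rw [ext1_of_le _ _ _ (by omega), ext1_last _ _ _ rfl,
            show W ⟨l + 1, by omega⟩ = v from hlast]
          exact hxadj
      · intro i hi
        by_cases h : i + 2 ≤ l + 1
        · rw [ext1_of_le _ _ _ (by omega), ext1_of_le _ _ _ (by omega)]
          exact hB i h
        · have hi' : i = l := by omega
          subst hi'
          rw [ext1_of_le _ _ _ (by omega), ext1_last _ _ _ rfl]
          exact fun hc => hxne hc.symm
    · show adj E (ext1 (ext1 W x) v ⟨l + 2, by omega⟩) (ext1 (ext1 W x) v (Fin.last (l + 3)))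
      rw [ext1_of_le _ _ _ (by omega), ext1_last _ _ _ rfl,
        show ext1 (ext1 W x) v (Fin.last (l + 3)) = v from ext1_last _ _ (by omega) rfl]
      exact adj_symm hxadj
    · show ext1 (ext1 W x) v ⟨l + 1, by omega⟩ = v
      rw [ext1_of_le _ _ _ (by omega), ext1_of_le _ _ _ (by omega)]
      exact hlast
  · intro w hw
    rw [Finset.mem_filter, AWset, Finset.mem_filter] at hw
    obtain ⟨⟨-, h0, hlast, hNBT, hadj⟩, hback⟩ := hw
    show ext1 (ext1 (trunc (show l + 1 ≤ l + 3 by omega) w) (w ⟨l + 2, by omega⟩)) v = w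
    funext i
    rcases i with ⟨i, hi⟩
    by_cases h1 : i ≤ l + 1
    · rw [ext1_of_le _ _ _ (by omega), ext1_of_le _ _ _ (by omega)]
      rfl
    by_cases h2 : i = l + 2
    · subst h2
      rw [ext1_of_le _ _ _ (by omega), ext1_last _ _ _ rfl]
    · have h3 : i = l + 3 := by omega
      subst h3
      rw [ext1_last _ _ _ rfl]
      exact hlast.symm
  · rintro ⟨W, x⟩ hp
    have h1 : trunc (show l + 1 ≤ l + 3 by omega) (ext1 (ext1 W x) v) = W := by
      funext i
      rcases i with ⟨i, hi⟩
      show ext1 (ext1 W x) v ⟨i, by omega⟩ = W ⟨i, hi⟩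
      rw [ext1_of_le _ _ _ (by omega), ext1_of_le _ _ _ (by omega)]
    have h2 : ext1 (ext1 W x) v ⟨l + 2, by omega⟩ = x := by
      rw [ext1_of_le _ _ _ (by omega)]
      exact ext1_last _ _ _ rfl
    show (⟨trunc (show l + 1 ≤ l + 3 by omega) (ext1 (ext1 W x) v),
        ext1 (ext1 W x) v ⟨l + 2, by omega⟩⟩ :
        Sigma fun _ : Fin (l + 1 + 1) → Fin n => Fin n) = ⟨W, x⟩
    rw [h1, h2]
  · intro w hw
    rw [Finset.mem_filter, AWset, Finset.mem_filter] at hw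
    obtain ⟨⟨-, h0, hlast, hNBT, hadj⟩, hback⟩ := hw
    show α ^ walkRot E (l + 3) w
      = α ^ walkRot E (l + 1) (trunc (show l + 1 ≤ l + 3 by omega) w)
    have hrot : walkRot E (l + 3) w
        = walkRot E (l + 1) (trunc (show l + 1 ≤ l + 3 by omega) w) := by
      rw [walkRot_eq_sum_range, walkRot_trunc, Finset.sum_range_succ, Finset.sum_range_succ,
        nstep_of_le _ (show l + 1 + 1 ≤ l + 3 by omega),
        nstep_of_le _ (show l + 2 + 1 ≤ l + 3 by omega)]
      have hv3 : w ⟨l + 2 + 1, by omega⟩ = v := hlast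
      have hv1 : w ⟨l + 1, by omega⟩ = v := hback
      rw [hv1, hv3]
      have hs := stepRot_swap E v (w ⟨l + 1 + 1, by omega⟩)
      have hx : w ⟨l + 2, by omega⟩ = w ⟨l + 1 + 1, by omega⟩ := rfl
      rw [hx]
      omega
    rw [hrot]

/-- for every `k ≥ 3`, `r_k = r_{k−1} A_α − r_{k−2} (D − I)`. -/
theorem statement1 {n : ℕ} (E : Fin n → Fin n → Prop) (hirr : ∀ u : Fin n, ¬ E u u)
    (α : ℂ) (habs : ‖α‖ = 1) (R : ℕ) [NeZero R]
    (hroot : α ^ R = 1) (hmin : ∀ k : ℕ, 0 < k → α ^ k = 1 → R ≤ k) :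
    ∀ k : ℕ, 3 ≤ k →
      rk E α R k = rk E α R (k - 1) * Aalpha E α - rk E α R (k - 2) * (Dmat E - 1) := by
  have hα : α ≠ 0 := by
    intro h; rw [h] at habs; simp at habs
  intro k hk
  obtain ⟨l, rfl⟩ : ∃ l, k = l + 3 := ⟨k - 3, by omega⟩
  have e1 : l + 3 - 1 = l + 2 := by omega
  have e2 : l + 3 - 2 = l + 1 := by omega
  rw [e1, e2]
  ext u v
  rw [Matrix.sub_apply, Matrix.mul_apply]
  have hD : (rk E α R (l + 1) * (Dmat E - 1)) u v
      = rk E α R (l + 1) u v * ((deg E v : ℂ) - 1) := by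
    have hDd : Dmat E - 1 = Matrix.diagonal (fun x : Fin n => (deg E x : ℂ) - 1) := by
      rw [Dmat, ← Matrix.diagonal_one, Matrix.diagonal_sub]
    rw [hDd, Matrix.mul_diagonal]
  rw [hD]
  simp only [rk_apply E hα R hroot, Aalpha_apply_eq habs E]
  have hb2 : ∑ x, (∑ W ∈ Wset E (l + 2) u x, α ^ walkRot E (l + 2) W) *
      (if adj E x v then α ^ stepRot E x v else 0)
      = ∑ W ∈ Bset E l u v,
          α ^ walkRot E (l + 2) W * α ^ stepRot E (W (Fin.last (l + 2))) v := by
    have hx1 : ∀ x : Fin n, (∑ W ∈ Wset E (l + 2) u x, α ^ walkRot E (l + 2) W) *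
        (if adj E x v then α ^ stepRot E x v else 0)
        = ∑ W ∈ Wset E (l + 2) u x, α ^ walkRot E (l + 2) W *
            (if adj E (W (Fin.last (l + 2))) v then
              α ^ stepRot E (W (Fin.last (l + 2))) v else 0) := by
      intro x
      rw [Finset.sum_mul]
      refine Finset.sum_congr rfl fun W hW => ?_
      rw [Wset, Finset.mem_filter] at hW
      rw [hW.2.2.1]
    have hfib := Finset.sum_fiberwise (Finset.univ.filter fun W : Fin (l + 3) → Fin n =>
        W 0 = u ∧ IsNBTWalk E (l + 2) W) (fun W => W (Fin.last (l + 2)))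
      (fun W => α ^ walkRot E (l + 2) W *
        (if adj E (W (Fin.last (l + 2))) v then
          α ^ stepRot E (W (Fin.last (l + 2))) v else 0))
    have hWx : ∀ x : Fin n, Wset E (l + 2) u x
        = (Finset.univ.filter fun W : Fin (l + 3) → Fin n =>
            W 0 = u ∧ IsNBTWalk E (l + 2) W).filter
              (fun W => W (Fin.last (l + 2)) = x) := by
      intro x
      rw [Wset, Finset.filter_filter]
      exact Finset.filter_congr fun W _ => by tauto
    rw [Finset.sum_congr rfl (fun x _ => hx1 x),
      Finset.sum_congr rfl (fun x _ => by rw [hWx x]), hfib]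
    have hsplit : ∀ W : Fin (l + 3) → Fin n,
        α ^ walkRot E (l + 2) W * (if adj E (W (Fin.last (l + 2))) v then
          α ^ stepRot E (W (Fin.last (l + 2))) v else 0)
        = if adj E (W (Fin.last (l + 2))) v then
            α ^ walkRot E (l + 2) W * α ^ stepRot E (W (Fin.last (l + 2))) v else 0 := by
      intro W; split_ifs <;> ring
    rw [Finset.sum_congr rfl (fun W _ => hsplit W)]
    rw [← Finset.sum_filter]
    congr 1
    rw [Bset, Finset.filter_filter]
    exact Finset.filter_congr fun W _ => by tauto
  rw [hb2, ← sum_AWset_eq_sum_Bset hα l u v,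
    ← Finset.sum_filter_add_sum_filter_not (AWset E l u v)
      (fun w => w ⟨l + 1, by omega⟩ = v) (fun w => α ^ walkRot E (l + 3) w),
    sum_back hα l u v, AWset_filter_not l u v]
  ring

end CNBT
end

section
/- Let G be a finite simple directed graph without self-loops. Then for every integer k≥1, tr((B_α)^k) = Σ_{r=0}^{R−1} α^r n_{(k,r)}, where n_{(k,r)} is the number of tailless NBT cycles of length k and rotation r. -/
open Matrix BigOperators
open scoped Classical

namespace CNBT

variable {n : ℕ}

/-! ### Auxiliary lemmas -/

def oneEquiv (ι : Type*) : ι ≃ (Fin 1 → ι) :=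
  ⟨fun x _ => x, fun p => p 0, fun _ => rfl,
   fun p => funext fun i => by rw [Subsingleton.elim i 0]⟩

def snocEquiv (ι : Type*) (k : ℕ) : ((Fin (k+1) → ι) × ι) ≃ (Fin (k+2) → ι) where
  toFun := fun px => Fin.snoc px.1 px.2
  invFun := fun q => (Fin.init q, q (Fin.last _))
  left_inv := fun px => by simp [Fin.init_snoc]
  right_inv := fun q => by simp [Fin.snoc_init_self]

lemma pow_entry {ι : Type*} [Fintype ι] [DecidableEq ι] (M : Matrix ι ι ℂ) :
    ∀ (k : ℕ) (u v : ι), (M ^ k) u v =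
      ∑ p : Fin (k+1) → ι, if p 0 = u ∧ p (Fin.last k) = v then
        ∏ i : Fin k, M (p i.castSucc) (p i.succ) else 0 := by
  intro k
  induction k with
  | zero =>
    intro u v
    rw [pow_zero, Matrix.one_apply]
    rw [← Equiv.sum_comp (oneEquiv ι)]
    simp only [oneEquiv, Equiv.coe_fn_mk, Fin.prod_univ_zero]
    rw [Finset.sum_congr rfl (fun x _ => by exact ite_and _ _ _ _)]
    erw [Finset.sum_ite_eq' Finset.univ u (fun x => if x = v then (1:ℂ) else 0)]
    simp
  | succ k ih =>
    intro u v
    rw [pow_succ, Matrix.mul_apply]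
    simp only [ih]
    simp only [Finset.sum_mul]
    rw [Finset.sum_comm]
    rw [← Equiv.sum_comp (snocEquiv ι k), Fintype.sum_prod_type]
    apply Finset.sum_congr rfl
    intro p _
    have h0 : ∀ x : ι, (snocEquiv ι k (p, x)) 0 = p 0 := by
      intro x
      have : ((0 : Fin (k+1)).castSucc) = (0 : Fin (k+2)) := by simp
      simp only [snocEquiv, Equiv.coe_fn_mk, ← this, Fin.snoc_castSucc]
    have hlast : ∀ x : ι, (snocEquiv ι k (p, x)) (Fin.last (k+1)) = x := by
      intro x
      simp [snocEquiv]
    have hprod : ∀ x : ι, ∏ i : Fin (k+1), M ((snocEquiv ι k (p, x)) i.castSucc)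
        ((snocEquiv ι k (p, x)) i.succ)
        = (∏ i : Fin k, M (p i.castSucc) (p i.succ)) * M (p (Fin.last k)) x := by
      intro x
      rw [Fin.prod_univ_castSucc]
      congr 1
      · apply Finset.prod_congr rfl
        intro i _
        simp only [snocEquiv, Equiv.coe_fn_mk, Fin.succ_castSucc, Fin.snoc_castSucc]
      · simp only [snocEquiv, Equiv.coe_fn_mk, Fin.succ_last, Fin.snoc_castSucc, Fin.snoc_last]
    simp only [h0, hlast, hprod]
    by_cases h1 : p 0 = u
    · simp only [h1, true_and]
      rw [Finset.sum_congr rfl (fun x _ => by rw [ite_mul, zero_mul]),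
        Finset.sum_ite_eq Finset.univ (p (Fin.last k))
          (fun x => (∏ i : Fin k, M (p i.castSucc) (p i.succ)) * M x v),
        Finset.sum_ite_eq' Finset.univ v
          (fun x => (∏ i : Fin k, M (p i.castSucc) (p i.succ)) * M (p (Fin.last k)) x)]
      simp
    · simp [h1]

lemma trace_pow' {ι : Type*} [Fintype ι] [DecidableEq ι] (M : Matrix ι ι ℂ) (k : ℕ) :
    Matrix.trace (M ^ k) =
      ∑ p : Fin (k+1) → ι, if p 0 = p (Fin.last k) then
        ∏ i : Fin k, M (p i.castSucc) (p i.succ) else 0 := by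
  rw [Matrix.trace]
  simp only [Matrix.diag, pow_entry]
  rw [Finset.sum_comm]
  apply Finset.sum_congr rfl
  intro p _
  rw [Finset.sum_congr rfl (fun x _ => by rw [ite_and]),
    Finset.sum_ite_eq Finset.univ (p 0)
      (fun x => if p (Fin.last k) = x then (∏ i : Fin k, M (p i.castSucc) (p i.succ)) else 0)]
  simp [eq_comm]

lemma lam_ne_zero {E : Fin n → Fin n → Prop} {α : ℂ} (habs : ‖α‖ = 1)
    (e : DEdge E) : lam E α e ≠ 0 := by
  have hα : α ≠ 0 := by intro h; rw [h] at habs; simp at habs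
  unfold lam
  split_ifs
  · exact one_ne_zero
  · exact hα
  · intro h
    apply hα
    have := congrArg (starRingEnd ℂ) h
    simpa using this

lemma lam_eq_zpow {E : Fin n → Fin n → Prop} {α : ℂ} (habs : ‖α‖ = 1)
    (e : DEdge E) : lam E α e = α ^ (stepRot E e.1.1 e.1.2) := by
  have hα : α ≠ 0 := by intro h; rw [h] at habs; simp at habs
  have hconj : (starRingEnd ℂ) α = α⁻¹ := (Complex.inv_eq_conj habs).symm
  obtain ⟨⟨u, v⟩, hadj⟩ := e
  simp only [lam, stepRot]
  by_cases hb : bidir E u v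
  · have hf : ¬ fwd E u v := fun hf => hf.2 hb.2
    have hw : ¬ bwd E u v := fun hw => hw.2 hb.1
    simp [hb, hf, hw]
  · by_cases hf : fwd E u v
    · simp [hb, hf]
    · have hw : bwd E u v := by
        unfold adj at hadj; unfold bidir at hb; unfold fwd at hf; unfold bwd; tauto
      have hf' : ¬ fwd E u v := hf
      simp only [hb, hf', hw, if_false, if_true, if_neg, if_pos]
      rw [hconj]
      norm_num

lemma zpow_mod_R {α : ℂ} (hα : α ≠ 0) {R : ℕ} [NeZero R] (hroot : α ^ R = 1) (z : ℤ) :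
    α ^ z = α ^ (((z : ZMod R)).val) := by
  have h2 : (R:ℤ) ∣ z - ((z : ZMod R)).val := by
    rw [← ZMod.intCast_zmod_eq_zero_iff_dvd]
    push_cast
    rw [ZMod.natCast_zmod_val]
    ring
  obtain ⟨t, ht⟩ := h2
  have hz : z = (((z : ZMod R)).val : ℤ) + R * t := by omega
  conv_lhs => rw [hz, zpow_add₀ hα, zpow_natCast]
  have h3 : α ^ ((R : ℤ) * t) = 1 := by
    rw [_root_.zpow_mul, zpow_natCast, hroot, _root_.one_zpow]
  rw [h3, mul_one]

lemma prod_zpow_sum {α : ℂ} (hα : α ≠ 0) {k : ℕ} (f : Fin k → ℤ) :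
    ∏ i : Fin k, α ^ (f i) = α ^ (∑ i : Fin k, f i) := by
  induction k with
  | zero => simp
  | succ k ih =>
    rw [Fin.prod_univ_succ, Fin.sum_univ_succ, ih (fun i => f i.succ), ← zpow_add₀ hα]

def GoodP (E : Fin n → Fin n → Prop) (k : ℕ) (p : Fin (k+1) → DEdge E) : Prop :=
  p 0 = p (Fin.last k) ∧ ∀ i : Fin k,
    (p i.castSucc).1.2 = (p i.succ).1.1 ∧ (p i.castSucc).1.1 ≠ (p i.succ).1.2

lemma term_eq {E : Fin n → Fin n → Prop} {α : ℂ} (habs : ‖α‖ = 1)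
    {k : ℕ} (p : Fin (k+1) → DEdge E) :
    (if p 0 = p (Fin.last k) then ∏ i : Fin k, Balpha E α (p i.castSucc) (p i.succ) else 0)
      = if GoodP E k p then ∏ i : Fin k, lam E α (p i.castSucc) else 0 := by
  have hB : ∀ e f : DEdge E, Balpha E α e f =
      if e.1.2 = f.1.1 ∧ e.1.1 ≠ f.1.2 then lam E α f else 0 := by
    intro e f
    rw [Balpha, Matrix.mul_diagonal, Bmat]
    simp only [Matrix.of_apply, ite_mul, one_mul, zero_mul]
  by_cases hc : p 0 = p (Fin.last k)
  · rw [if_pos hc]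
    by_cases hall : ∀ i : Fin k,
        (p i.castSucc).1.2 = (p i.succ).1.1 ∧ (p i.castSucc).1.1 ≠ (p i.succ).1.2
    · rw [if_pos ⟨hc, hall⟩]
      rw [Finset.prod_congr rfl (fun i _ => by rw [hB, if_pos (hall i)])]
      have hprod := Fin.prod_univ_succ (fun j : Fin (k+1) => lam E α (p j))
      have hprod2 := Fin.prod_univ_castSucc (fun j : Fin (k+1) => lam E α (p j))
      have heq : lam E α (p 0) * ∏ i : Fin k, lam E α (p i.succ)
          = (∏ i : Fin k, lam E α (p i.castSucc)) * lam E α (p (Fin.last k)) :=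
        hprod.symm.trans hprod2
      rw [hc] at heq
      exact mul_left_cancel₀ (lam_ne_zero habs _) (heq.trans (mul_comm _ _))
    · rw [if_neg (fun hg => hall hg.2)]
      obtain ⟨i, hi⟩ := not_forall.mp hall
      exact Finset.prod_eq_zero (Finset.mem_univ i) (by rw [hB, if_neg hi])
  · rw [if_neg hc, if_neg (fun hg => hc hg.1)]

set_option maxHeartbeats 2000000 in
/-- from a closed NBT edge path, the vertex cycle is a tailless NBT cycle -/
lemma goodP_facts {E : Fin n → Fin n → Prop} {k : ℕ} (hk : 1 ≤ k)
    (p : Fin (k+1) → DEdge E) (hp : GoodP E k p) :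
    (fun j => (p j).1.1) 0 = (fun j => (p j).1.1) (Fin.last k) ∧
    IsNBTWalk E k (fun j => (p j).1.1) ∧
    IsNBTWalk E (2*k) (doubleWalk k (fun j => (p j).1.1)) := by
  obtain ⟨hc, hs⟩ := hp
  set w : Fin (k+1) → Fin n := fun j => (p j).1.1 with hwdef
  have hW : ∀ i : Fin k, (p i.castSucc).1.2 = w i.succ := fun i => (hs i).1
  -- ℕ-indexed master facts
  have hadj' : ∀ (a : ℕ) (h : a < k), adj E (w ⟨a, by omega⟩) (w ⟨a+1, by omega⟩) := by
    intro a h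
    have h2 := (p (⟨a, h⟩ : Fin k).castSucc).2
    rw [hW ⟨a, h⟩] at h2
    exact h2
  have hne' : ∀ (a : ℕ) (h : a+2 ≤ k), w ⟨a, by omega⟩ ≠ w ⟨a+2, by omega⟩ := by
    intro a h
    have h1 := (hs ⟨a, by omega⟩).2
    have e1 : (⟨a, by omega⟩ : Fin k).succ = (⟨a+1, by omega⟩ : Fin k).castSucc :=
      Fin.ext (by simp)
    rw [e1, hW ⟨a+1, by omega⟩] at h1
    exact h1
  have hclose : w ⟨k, by omega⟩ = w ⟨0, by omega⟩ := by
    have h2 : w 0 = w (Fin.last k) := congrArg (fun e => e.1.1) hc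
    have e0 : (⟨0, by omega⟩ : Fin (k+1)) = 0 := Fin.ext (by simp)
    have e1 : (⟨k, by omega⟩ : Fin (k+1)) = Fin.last k := Fin.ext (by simp [Fin.last])
    rw [e0, e1]
    exact h2.symm
  have h01 : (p 0).1.2 = w ⟨1, by omega⟩ := by
    have h2 := hW (⟨0, by omega⟩ : Fin k)
    have e0 : (⟨0, by omega⟩ : Fin k).castSucc = (0 : Fin (k+1)) := Fin.ext (by simp)
    have e1 : (⟨0, by omega⟩ : Fin k).succ = (⟨1, by omega⟩ : Fin (k+1)) := Fin.ext (by simp)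
    rw [e0, e1] at h2
    exact h2
  have hwrap : ∀ (a b : ℕ) (ha : a < k+1) (hb : b < k+1), a = k-1 → b = 1 →
      w ⟨a, ha⟩ ≠ w ⟨b, hb⟩ := by
    intro a b ha hb h1 h2
    subst h1; subst h2
    have h3 := (hs ⟨k-1, by omega⟩).2
    have e1 : (⟨k-1, by omega⟩ : Fin k).succ = Fin.last k := Fin.ext (by simp; omega)
    rw [e1, ← hc, h01] at h3
    exact h3
  -- master facts with both endpoints free
  have Hadj : ∀ (a b : ℕ) (ha : a < k+1) (hb : b < k+1), b = a+1 →
      adj E (w ⟨a, ha⟩) (w ⟨b, hb⟩) := by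
    intro a b ha hb h; subst h; exact hadj' a (by omega)
  have Hne : ∀ (a b : ℕ) (ha : a < k+1) (hb : b < k+1), b = a+2 → b ≤ k →
      w ⟨a, ha⟩ ≠ w ⟨b, hb⟩ := by
    intro a b ha hb h hbk; subst h; exact hne' a (by omega)
  have Hcloseadj : ∀ (a b : ℕ) (ha : a < k+1) (hb : b < k+1), a = k → b = 1 →
      adj E (w ⟨a, ha⟩) (w ⟨b, hb⟩) := by
    intro a b ha hb h1 h2; subst h1; subst h2
    have e : (w ⟨a, ha⟩ : Fin n) = w ⟨0, by omega⟩ := hclose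
    rw [e]
    exact hadj' 0 (by omega)
  have Hclosene : ∀ (a b : ℕ) (ha : a < k+1) (hb : b < k+1), a = k → b = 2 → 2 ≤ k →
      w ⟨a, ha⟩ ≠ w ⟨b, hb⟩ := by
    intro a b ha hb h1 h2 h3; subst h1; subst h2
    have e : (w ⟨a, ha⟩ : Fin n) = w ⟨0, by omega⟩ := hclose
    rw [e]
    exact hne' 0 (by omega)
  refine ⟨?_, ⟨?_, ?_⟩, ?_, ?_⟩
  · exact congrArg (fun e => e.1.1) hc
  · intro i j hj
    have hjk := j.isLt
    exact Hadj (i:ℕ) (j:ℕ) i.isLt j.isLt (by omega)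
  · intro i j hj
    have hjk := j.isLt
    exact Hne (i:ℕ) (j:ℕ) i.isLt j.isLt (by omega) (by omega)
  · -- adjacency for the double walk
    intro i j hj
    have hik := i.isLt
    have hjk := j.isLt
    simp only [doubleWalk]
    rcases Nat.lt_or_ge (i:ℕ) k with h1 | h1
    · rw [dif_pos (by omega : (i:ℕ) ≤ k), dif_pos (by omega : (j:ℕ) ≤ k)]
      exact Hadj _ _ _ _ (by omega)
    · rcases Nat.eq_or_lt_of_le h1 with h2 | h2
      · rw [dif_pos (by omega : (i:ℕ) ≤ k), dif_neg (by omega : ¬ (j:ℕ) ≤ k)]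
        exact Hcloseadj _ _ _ _ (by omega) (by omega)
      · rw [dif_neg (by omega : ¬ (i:ℕ) ≤ k), dif_neg (by omega : ¬ (j:ℕ) ≤ k)]
        exact Hadj _ _ _ _ (by omega)
  · -- non-backtracking for the double walk
    intro i j hj
    have hik := i.isLt
    have hjk := j.isLt
    simp only [doubleWalk]
    rcases Nat.lt_or_ge ((i:ℕ)+1) k with h1 | h1
    · rw [dif_pos (by omega : (i:ℕ) ≤ k), dif_pos (by omega : (j:ℕ) ≤ k)]
      exact Hne _ _ _ _ (by omega) (by omega)
    · rcases Nat.eq_or_lt_of_le h1 with h2 | h2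
      · -- i = k-1, j = k+1
        rw [dif_pos (by omega : (i:ℕ) ≤ k), dif_neg (by omega : ¬ (j:ℕ) ≤ k)]
        exact hwrap _ _ _ _ (by omega) (by omega)
      · rcases Nat.eq_or_lt_of_le h2 with h3 | h3
        · -- i = k, j = k+2
          rw [dif_pos (by omega : (i:ℕ) ≤ k), dif_neg (by omega : ¬ (j:ℕ) ≤ k)]
          exact Hclosene _ _ _ _ (by omega) (by omega) (by omega)
        · rw [dif_neg (by omega : ¬ (i:ℕ) ≤ k), dif_neg (by omega : ¬ (j:ℕ) ≤ k)]
          exact Hne _ _ _ _ (by omega) (by omega)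

/-- the edge path associated to a closed vertex walk -/
noncomputable def toP (E : Fin n → Fin n → Prop) {k : ℕ} (hk : 1 ≤ k)
    (w : Fin (k+1) → Fin n)
    (hadj : ∀ i j : Fin (k+1), (j:ℕ) = (i:ℕ)+1 → adj E (w i) (w j)) :
    Fin (k+1) → DEdge E := fun j =>
  if h : (j:ℕ) < k then
    ⟨(w ⟨(j:ℕ), by omega⟩, w ⟨(j:ℕ)+1, by omega⟩), hadj ⟨(j:ℕ), by omega⟩ ⟨(j:ℕ)+1, by omega⟩ rfl⟩
  else
    ⟨(w ⟨0, by omega⟩, w ⟨1, by omega⟩), hadj ⟨0, by omega⟩ ⟨1, by omega⟩ rfl⟩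

lemma toP_fst_lt {E : Fin n → Fin n → Prop} {k : ℕ} (hk : 1 ≤ k)
    (w : Fin (k+1) → Fin n) (hadj : ∀ i j : Fin (k+1), (j:ℕ) = (i:ℕ)+1 → adj E (w i) (w j))
    (j : Fin (k+1)) (h : (j:ℕ) < k) :
    (toP E hk w hadj j).1 = (w ⟨(j:ℕ), by omega⟩, w ⟨(j:ℕ)+1, by omega⟩) := by
  simp only [toP]
  rw [dif_pos h]

lemma toP_fst_ge {E : Fin n → Fin n → Prop} {k : ℕ} (hk : 1 ≤ k)
    (w : Fin (k+1) → Fin n) (hadj : ∀ i j : Fin (k+1), (j:ℕ) = (i:ℕ)+1 → adj E (w i) (w j))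
    (j : Fin (k+1)) (h : ¬ (j:ℕ) < k) :
    (toP E hk w hadj j).1 = (w ⟨0, by omega⟩, w ⟨1, by omega⟩) := by
  simp only [toP]
  rw [dif_neg h]

set_option maxHeartbeats 2000000 in
lemma toP_good {E : Fin n → Fin n → Prop} {k : ℕ} (hk : 1 ≤ k)
    (w : Fin (k+1) → Fin n)
    (hadj : ∀ i j : Fin (k+1), (j:ℕ) = (i:ℕ)+1 → adj E (w i) (w j))
    (hc : w 0 = w (Fin.last k))
    (hn2 : ∀ i j : Fin (k+1), (j:ℕ) = (i:ℕ)+2 → w i ≠ w j)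
    (hd : IsNBTWalk E (2*k) (doubleWalk k w)) :
    GoodP E k (toP E hk w hadj) := by
  have wcong : ∀ (a b : ℕ) (ha : a < k+1) (hb : b < k+1), a = b → w ⟨a, ha⟩ = w ⟨b, hb⟩ :=
    fun a b ha hb h => congrArg w (Fin.ext h)
  have hc' : ∀ (a b : ℕ) (ha : a < k+1) (hb : b < k+1), a = k → b = 0 →
      w ⟨a, ha⟩ = w ⟨b, hb⟩ := by
    intro a b ha hb h1 h2
    have e1 : (⟨a, ha⟩ : Fin (k+1)) = Fin.last k := Fin.ext (by simp only [Fin.val_last]; omega)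
    have e2 : (⟨b, hb⟩ : Fin (k+1)) = 0 := Fin.ext (by simp only [Fin.val_zero]; omega)
    rw [e1, e2]
    exact hc.symm
  have hwrapne : ∀ (a b : ℕ) (ha : a < k+1) (hb : b < k+1), a = k-1 → b = 1 →
      w ⟨a, ha⟩ ≠ w ⟨b, hb⟩ := by
    intro a b ha hb h1 h2
    have h3 := hd.2 ⟨k-1, by omega⟩ ⟨k+1, by omega⟩ (by show k+1 = (k-1)+2; omega)
    simp only [doubleWalk, Fin.val_mk] at h3
    rw [dif_pos (by omega : k-1 ≤ k), dif_neg (by omega : ¬ k+1 ≤ k)] at h3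
    intro h4
    apply h3
    exact (wcong _ _ _ _ (by omega)).trans (h4.trans (wcong _ _ _ _ (by omega)))
  constructor
  · apply Subtype.ext
    rw [toP_fst_lt hk w hadj 0 (by simp only [Fin.val_zero]; omega),
      toP_fst_ge hk w hadj (Fin.last k) (by simp only [Fin.val_last]; omega)]
    exact Prod.ext (wcong _ _ _ _ (by simp only [Fin.val_zero]))
      (wcong _ _ _ _ (by simp only [Fin.val_zero]))
  · intro i
    have hik := i.isLt
    by_cases h : (i:ℕ)+1 < k
    · constructor
      · rw [toP_fst_lt hk w hadj i.castSucc (by simp only [Fin.coe_castSucc]; omega),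
          toP_fst_lt hk w hadj i.succ (by simp only [Fin.val_succ]; omega)]
        exact wcong _ _ _ _ (by simp only [Fin.coe_castSucc, Fin.val_succ])
      · rw [toP_fst_lt hk w hadj i.castSucc (by simp only [Fin.coe_castSucc]; omega),
          toP_fst_lt hk w hadj i.succ (by simp only [Fin.val_succ]; omega)]
        intro h4
        exact hn2 ⟨(i:ℕ), by omega⟩ ⟨(i:ℕ)+2, by omega⟩ (by simp only [])
          ((wcong _ _ _ _ (by simp only [Fin.coe_castSucc])).trans
            (h4.trans (wcong _ _ _ _ (by simp only [Fin.val_succ]))))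
    · -- i+1 = k
      constructor
      · rw [toP_fst_lt hk w hadj i.castSucc (by simp only [Fin.coe_castSucc]; omega),
          toP_fst_ge hk w hadj i.succ (by simp only [Fin.val_succ]; omega)]
        exact hc' _ _ _ _ (by simp only [Fin.coe_castSucc]; omega) rfl
      · rw [toP_fst_lt hk w hadj i.castSucc (by simp only [Fin.coe_castSucc]; omega),
          toP_fst_ge hk w hadj i.succ (by simp only [Fin.val_succ]; omega)]
        exact hwrapne _ _ _ _ (by simp only [Fin.coe_castSucc]; omega) rfl

set_option maxHeartbeats 4000000 in
lemma toP_left_inv {E : Fin n → Fin n → Prop} {k : ℕ} (hk : 1 ≤ k)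
    (p : Fin (k+1) → DEdge E) (hp : GoodP E k p)
    (hadj : ∀ i j : Fin (k+1), (j:ℕ) = (i:ℕ)+1 →
      adj E ((fun j => (p j).1.1) i) ((fun j => (p j).1.1) j)) :
    toP E hk (fun j => (p j).1.1) hadj = p := by
  obtain ⟨hc, hs⟩ := hp
  funext j
  apply Subtype.ext
  by_cases h : (j:ℕ) < k
  · rw [toP_fst_lt hk _ hadj j h]
    have hstep : (p j).1.2 = (p ⟨(j:ℕ)+1, by omega⟩).1.1 := (hs ⟨(j:ℕ), h⟩).1
    exact Prod.ext rfl hstep.symm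
  · have hj : j = Fin.last k := Fin.ext (by have := j.isLt; simp only [Fin.val_last]; omega)
    subst hj
    rw [toP_fst_ge hk _ hadj _ h]
    have hz : (⟨0, by omega⟩ : Fin (k+1)) = 0 := Fin.ext (by simp)
    have hstep0 : (p 0).1.2 = (p ⟨1, by omega⟩).1.1 := by
      have h2 : (p ⟨0, by omega⟩).1.2 = (p ⟨1, by omega⟩).1.1 := (hs ⟨0, by omega⟩).1
      rw [hz] at h2
      exact h2
    refine Prod.ext ?_ ?_
    · show (p ⟨0, by omega⟩).1.1 = (p (Fin.last k)).1.1
      rw [← hc]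
      exact congrArg (fun x => (p x).1.1) hz
    · show (p ⟨1, by omega⟩).1.1 = (p (Fin.last k)).1.2
      rw [← hc]
      exact hstep0.symm

lemma toP_right_inv {E : Fin n → Fin n → Prop} {k : ℕ} (hk : 1 ≤ k)
    (w : Fin (k+1) → Fin n)
    (hadj : ∀ i j : Fin (k+1), (j:ℕ) = (i:ℕ)+1 → adj E (w i) (w j))
    (hc : w 0 = w (Fin.last k)) :
    (fun j => (toP E hk w hadj j).1.1) = w := by
  funext j
  show (toP E hk w hadj j).1.1 = w j
  by_cases h : (j:ℕ) < k
  · rw [toP_fst_lt hk w hadj j h]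
  · have hj : j = Fin.last k := Fin.ext (by have := j.isLt; simp only [Fin.val_last]; omega)
    subst hj
    rw [toP_fst_ge hk w hadj _ h]
    have hz : (⟨0, by omega⟩ : Fin (k+1)) = 0 := Fin.ext (by simp)
    exact (congrArg w hz).trans hc

lemma prod_lam_eq {E : Fin n → Fin n → Prop} {α : ℂ} (habs : ‖α‖ = 1)
    {R : ℕ} [NeZero R] (hroot : α ^ R = 1) {k : ℕ}
    (p : Fin (k+1) → DEdge E) (hp : GoodP E k p) :
    ∏ i : Fin k, lam E α (p i.castSucc)
      = α ^ ((walkRot E k (fun j => (p j).1.1) : ZMod R)).val := by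
  have hα : α ≠ 0 := by intro h; rw [h] at habs; simp at habs
  have h1 : ∀ i : Fin k, lam E α (p i.castSucc) =
      α ^ (stepRot E ((fun j => (p j).1.1) i.castSucc) ((fun j => (p j).1.1) i.succ)) := by
    intro i
    rw [lam_eq_zpow habs (p i.castSucc), (hp.2 i).1]
  rw [Finset.prod_congr rfl (fun i _ => h1 i), prod_zpow_sum hα]
  have h2 : (∑ i : Fin k, stepRot E ((fun j => (p j).1.1) i.castSucc)
      ((fun j => (p j).1.1) i.succ)) = walkRot E k (fun j => (p j).1.1) := rfl
  rw [h2, zpow_mod_R hα hroot]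

set_option maxHeartbeats 1000000 in
lemma bij_sum {E : Fin n → Fin n → Prop} {α : ℂ} (habs : ‖α‖ = 1)
    {R : ℕ} [NeZero R] (hroot : α ^ R = 1) {k : ℕ} (hk : 1 ≤ k) :
    ∑ p ∈ Finset.univ.filter (fun p : Fin (k+1) → DEdge E => GoodP E k p),
        ∏ i : Fin k, lam E α (p i.castSucc)
    = ∑ w ∈ Finset.univ.filter (fun w : Fin (k+1) → Fin n =>
        w 0 = w (Fin.last k) ∧ IsNBTWalk E k w ∧ IsNBTWalk E (2*k) (doubleWalk k w)),
        α ^ ((walkRot E k w : ZMod R)).val := by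
  refine Finset.sum_bij' (fun p _ => fun j => (p j).1.1)
    (fun w hw => toP E hk w (fun i j hj => ((Finset.mem_filter.mp hw).2.2.1).1 i j hj))
    ?_ ?_ ?_ ?_ ?_
  · intro p hp
    exact Finset.mem_filter.mpr
      ⟨Finset.mem_univ _, goodP_facts hk p (Finset.mem_filter.mp hp).2⟩
  · intro w hw
    have hw' := (Finset.mem_filter.mp hw).2
    exact Finset.mem_filter.mpr
      ⟨Finset.mem_univ _, toP_good hk w _ hw'.1 hw'.2.1.2 hw'.2.2⟩
  · intro p hp
    exact toP_left_inv hk p (Finset.mem_filter.mp hp).2 _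
  · intro w hw
    exact toP_right_inv hk w _ (Finset.mem_filter.mp hw).2.1
  · intro p hp
    exact prod_lam_eq habs hroot p (Finset.mem_filter.mp hp).2

/-- for every `k ≥ 1`, `tr((B_α)^k) = Σ_{r=0}^{R−1} α^r n_{(k,r)}`. -/
theorem statement7 {n : ℕ} (E : Fin n → Fin n → Prop) (hirr : ∀ u : Fin n, ¬ E u u)
    (α : ℂ) (habs : ‖α‖ = 1) (R : ℕ) [NeZero R]
    (hroot : α ^ R = 1) (hmin : ∀ k : ℕ, 0 < k → α ^ k = 1 → R ≤ k) :
    ∀ k : ℕ, 1 ≤ k →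
      Matrix.trace (Balpha E α ^ k) = ∑ r : ZMod R, α ^ r.val * (ncyc E R k r : ℂ) := by
  intro k hk
  rw [trace_pow' (Balpha E α) k]
  rw [Finset.sum_congr rfl (fun p _ => term_eq habs p)]
  rw [← Finset.sum_filter]
  rw [bij_sum habs hroot hk]
  rw [Finset.sum_filter]
  have step : ∀ w : Fin (k+1) → Fin n,
      (if (w 0 = w (Fin.last k) ∧ IsNBTWalk E k w ∧ IsNBTWalk E (2*k) (doubleWalk k w))
        then (α ^ ((walkRot E k w : ZMod R)).val : ℂ) else 0)
      = ∑ r : ZMod R, if (w 0 = w (Fin.last k) ∧ IsNBTWalk E k w ∧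
          IsNBTWalk E (2*k) (doubleWalk k w) ∧ ((walkRot E k w : ZMod R) = r))
          then (α ^ r.val : ℂ) else 0 := by
    intro w
    by_cases hcw : w 0 = w (Fin.last k) ∧ IsNBTWalk E k w ∧ IsNBTWalk E (2*k) (doubleWalk k w)
    · rw [if_pos hcw]
      have hterm : ∀ r : ZMod R,
          (if (w 0 = w (Fin.last k) ∧ IsNBTWalk E k w ∧
            IsNBTWalk E (2*k) (doubleWalk k w) ∧ ((walkRot E k w : ZMod R) = r))
            then (α ^ r.val : ℂ) else 0)
          = (if ((walkRot E k w : ZMod R) = r) then (α ^ r.val : ℂ) else 0) := by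
        intro r
        by_cases hr : (walkRot E k w : ZMod R) = r
        · rw [if_pos ⟨hcw.1, hcw.2.1, hcw.2.2, hr⟩, if_pos hr]
        · rw [if_neg (fun hx => hr hx.2.2.2), if_neg hr]
      rw [Finset.sum_congr rfl (fun r _ => hterm r)]
      rw [Finset.sum_ite_eq Finset.univ ((walkRot E k w : ZMod R))
        (fun r : ZMod R => (α ^ r.val : ℂ))]
      simp
    · rw [if_neg hcw]
      symm
      apply Finset.sum_eq_zero
      intro r _
      rw [if_neg (fun hx => hcw ⟨hx.1, hx.2.1, hx.2.2.1⟩)]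
  rw [Finset.sum_congr rfl (fun w _ => step w)]
  rw [Finset.sum_comm]
  apply Finset.sum_congr rfl
  intro r _
  rw [← Finset.sum_filter, Finset.sum_const, nsmul_eq_mul]
  rw [ncyc]
  push_cast
  ring

end CNBT
end
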